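/- Let A ∈ M_{n}(R) over a commutative ring R, and suppose v is an index such that deleting row/column v disconnects the remaining indices into two blocks with zero interaction. If the diagonal entry at v is written as a sum a₁ + a₂ distributed to the two sides, then for any subset T of the second block's indices, the same three-term coalescence identity holds for the characteristic polynomials with rows/columns in T deleted: p_{𝒢,T}(x) = p_{G,r}(x)·p_{H,T}(x) + p_{G}(x)·p_{H,T∪{v}}(x) − x·p_{G,r}(x)·p_{H,T∪{v}}(x). -/
import Mathlib


open Polynomial

/-- The bordered matrix `[[a, bᵀ], [b, B]]` over a commutative ring. -/
def corner {R γ : Type*} [CommRing R] (a : R) (b : γ → R) (B : Matrix γ γ R) :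
    Matrix (Unit ⊕ γ) (Unit ⊕ γ) R :=
  Matrix.of fun i j =>
    match i, j with
    | .inl _, .inl _ => a
    | .inl _, .inr k => b k
    | .inr k, .inl _ => b k
    | .inr k, .inr l => B k l

open Matrix in
/-- Auxiliary: bordered charmatrix with arbitrary corner entry `t`. -/
noncomputable def bord {R γ : Type*} [CommRing R] [Fintype γ] [DecidableEq γ]
    (t : R[X]) (u : γ → R) (D : Matrix γ γ R) :
    Matrix (Unit ⊕ γ) (Unit ⊕ γ) R[X] :=
  Matrix.of fun i j =>
    match i, j with
    | .inl _, .inl _ => t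
    | .inl _, .inr k => -Polynomial.C (u k)
    | .inr k, .inl _ => -Polynomial.C (u k)
    | .inr k, .inr l => charmatrix D k l

section Aux
open Matrix
variable {R γ η : Type*} [CommRing R] [Fintype γ] [DecidableEq γ] [Fintype η] [DecidableEq η]

lemma bord_det (t : R[X]) (u : γ → R) (D : Matrix γ γ R) :
    (bord t u D).det = (corner 0 u D).charpoly + (t - X) * D.charpoly := by
  have hrow : ∀ s : R[X], bord s u D =
      Matrix.updateRow (bord 0 u D) (Sum.inl ())
        (bord 0 u D (Sum.inl ()) + s • (Pi.single (Sum.inl ()) 1 : Unit ⊕ γ → R[X])) := by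
    intro s
    ext i j
    rcases i with _ | k <;> rcases j with _ | l <;>
      simp [bord, Matrix.updateRow_apply, Pi.single_apply]
  have hsingle :
      Matrix.det (Matrix.updateRow (bord 0 u D) (Sum.inl ())
          (Pi.single (Sum.inl ()) 1 : Unit ⊕ γ → R[X]))
        = D.charpoly := by
    have h1 : Matrix.updateRow (bord 0 u D) (Sum.inl ())
          (Pi.single (Sum.inl ()) 1 : Unit ⊕ γ → R[X])
        = Matrix.fromBlocks 1 0 (Matrix.of fun k (_ : Unit) => -Polynomial.C (u k))
            (charmatrix D) := by
      ext i j
      rcases i with _ | k <;> rcases j with _ | l <;>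
        simp [bord, Matrix.updateRow_apply, Pi.single_apply, Matrix.one_apply]
    rw [h1, Matrix.det_fromBlocks_zero₁₂]
    simp [Matrix.det_unique, Matrix.charpoly]
  have key : ∀ s : R[X], (bord s u D).det = (bord 0 u D).det + s * D.charpoly := by
    intro s
    rw [hrow s, Matrix.det_updateRow_add, Matrix.det_updateRow_smul, hsingle,
      Matrix.updateRow_eq_self]
  have hX : charmatrix (corner 0 u D) = bord X u D := by
    ext i j
    rcases i with _ | k <;> rcases j with _ | l <;>
      simp [bord, corner, charmatrix_apply, Matrix.diagonal_apply]
  have h0 : (corner 0 u D).charpoly = (bord 0 u D).det + X * D.charpoly := by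
    rw [Matrix.charpoly, hX, key X]
  rw [key t, h0]
  ring

lemma corner_split (b : γ → R) (c : η → R) (B : Matrix γ γ R) (C : Matrix η η R) :
    (corner (0 : R) (Sum.elim b c) (Matrix.fromBlocks B 0 0 C)).charpoly
      = (corner 0 b B).charpoly * C.charpoly + B.charpoly * (corner 0 c C).charpoly
        - X * B.charpoly * C.charpoly := by
  classical
  set N := charmatrix (corner (0 : R) (Sum.elim b c) (Matrix.fromBlocks B 0 0 C)) with hN
  set i₀ : Unit ⊕ (γ ⊕ η) := Sum.inl () with hi₀
  set colA : Unit ⊕ (γ ⊕ η) → R[X] := fun i =>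
    match i with
    | .inl _ => X
    | .inr (.inl g) => -Polynomial.C (b g)
    | .inr (.inr _) => 0 with hcolA
  set colB : Unit ⊕ (γ ⊕ η) → R[X] := fun i =>
    match i with
    | .inr (.inr h) => -Polynomial.C (c h)
    | _ => 0 with hcolB
  set rowA : Unit ⊕ (γ ⊕ η) → R[X] := fun j =>
    match j with
    | .inr (.inl g) => -Polynomial.C (b g)
    | _ => 0 with hrowA
  have hcol : N.updateCol i₀ (colA + colB) = N := by
    ext i j
    by_cases hj : j = i₀
    · subst hj
      rcases i with _ | g | h <;>
        simp [hN, corner, charmatrix_apply, Matrix.diagonal_apply, hcolA, hcolB, hi₀,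
          Matrix.updateCol_apply]
    · simp [Matrix.updateCol_apply, hj]
  have hsplit : N.det = (N.updateCol i₀ colA).det + (N.updateCol i₀ colB).det := by
    conv_lhs => rw [← hcol]
    rw [Matrix.det_updateCol_add]
  set e₁ : (Unit ⊕ γ) ⊕ η ≃ Unit ⊕ (γ ⊕ η) := Equiv.sumAssoc Unit γ η with he₁
  set e₂ : (Unit ⊕ η) ⊕ γ ≃ Unit ⊕ (γ ⊕ η) :=
    (Equiv.sumAssoc Unit η γ).trans
      (Equiv.sumCongr (Equiv.refl Unit) (Equiv.sumComm η γ)) with he₂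
  have hd₁ : (N.updateCol i₀ colA).det = (corner 0 b B).charpoly * C.charpoly := by
    have hM₁ : (N.updateCol i₀ colA).submatrix e₁ e₁
        = Matrix.fromBlocks (charmatrix (corner 0 b B))
            (Matrix.of fun (i : Unit ⊕ γ) (h : η) =>
              match i with
              | .inl _ => -Polynomial.C (c h)
              | .inr _ => (0 : R[X]))
            0 (charmatrix C) := by
      ext i j
      rcases i with (_ | g) | h <;> rcases j with (_ | g') | h' <;>
        simp [hN, corner, charmatrix_apply, Matrix.diagonal_apply, hcolA, hi₀, he₁,
          Matrix.updateCol_apply, Equiv.sumAssoc, Matrix.fromBlocks]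
    rw [← Matrix.det_submatrix_equiv_self e₁, hM₁, Matrix.det_fromBlocks_zero₂₁,
      Matrix.charpoly, Matrix.charpoly]
  set M₂ := N.updateCol i₀ colB with hM₂def
  have hrow2 : M₂.updateRow i₀ (rowA + colB) = M₂ := by
    ext i j
    by_cases hi : i = i₀
    · subst hi
      rcases j with _ | g | h <;>
        simp [hM₂def, hN, corner, charmatrix_apply, Matrix.diagonal_apply, hrowA, hcolB,
          hcolB, hi₀, Matrix.updateCol_apply, Matrix.updateRow_apply]
    · simp [Matrix.updateRow_apply, hi]
  have hsplit2 : M₂.det = (M₂.updateRow i₀ rowA).det + (M₂.updateRow i₀ colB).det := by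
    conv_lhs => rw [← hrow2]
    rw [Matrix.det_updateRow_add]
  have hd₂₁ : (M₂.updateRow i₀ rowA).det = 0 := by
    have hM : (M₂.updateRow i₀ rowA).submatrix e₂ e₂
        = Matrix.fromBlocks
            (Matrix.fromBlocks 0 0 (Matrix.of fun (h : η) (_ : Unit) => -Polynomial.C (c h))
              (charmatrix C))
            (Matrix.of fun (i : Unit ⊕ η) (g : γ) =>
              match i with
              | .inl _ => -Polynomial.C (b g)
              | .inr _ => (0 : R[X]))
            0 (charmatrix B) := by
      ext i j
      rcases i with (_ | h) | g <;> rcases j with (_ | h') | g' <;>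
        simp [hM₂def, hN, corner, charmatrix_apply, Matrix.diagonal_apply, hrowA, hcolB, hi₀,
          he₂, Equiv.sumAssoc, Matrix.updateCol_apply, Matrix.updateRow_apply,
          Matrix.fromBlocks]
    rw [← Matrix.det_submatrix_equiv_self e₂, hM, Matrix.det_fromBlocks_zero₂₁,
      Matrix.det_fromBlocks_zero₁₂]
    simp [Matrix.det_unique]
  have hd₂₂ : (M₂.updateRow i₀ colB).det
      = ((corner 0 c C).charpoly - X * C.charpoly) * B.charpoly := by
    have hM : (M₂.updateRow i₀ colB).submatrix e₂ e₂
        = Matrix.fromBlocks (bord 0 c C) 0 0 (charmatrix B) := by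
      ext i j
      rcases i with (_ | h) | g <;> rcases j with (_ | h') | g' <;>
        simp [hM₂def, hN, corner, bord, charmatrix_apply, Matrix.diagonal_apply, hcolB, hcolB,
          hi₀, he₂, Equiv.sumAssoc, Matrix.updateCol_apply, Matrix.updateRow_apply,
          Matrix.fromBlocks]
    rw [← Matrix.det_submatrix_equiv_self e₂, hM, Matrix.det_fromBlocks_zero₂₁, bord_det,
      ← Matrix.charpoly]
    ring
  have : N.det = (corner (0 : R) (Sum.elim b c) (Matrix.fromBlocks B 0 0 C)).charpoly := rfl
  rw [← this, hsplit, hd₁, hsplit2, hd₂₁, hd₂₂]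
  ring

lemma corner_affine (a : R) (u : γ → R) (D : Matrix γ γ R) :
    (corner a u D).charpoly = (corner 0 u D).charpoly - Polynomial.C a * D.charpoly := by
  have h : charmatrix (corner a u D) = bord (X - Polynomial.C a) u D := by
    ext i j
    rcases i with _ | k <;> rcases j with _ | l <;>
      simp [bord, corner, charmatrix_apply, Matrix.diagonal_apply]
  rw [Matrix.charpoly, h, bord_det]
  ring

lemma corner_core (a₁ a₂ : R) (b : γ → R) (c : η → R) (B : Matrix γ γ R) (C : Matrix η η R) :
    (corner (a₁ + a₂) (Sum.elim b c) (Matrix.fromBlocks B 0 0 C)).charpoly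
      = B.charpoly * (corner a₂ c C).charpoly + (corner a₁ b B).charpoly * C.charpoly
        - X * B.charpoly * C.charpoly := by
  rw [corner_affine, corner_split, corner_affine a₂, corner_affine a₁,
    Matrix.charpoly_fromBlocks_zero₁₂, map_add]
  ring

end Aux

/-- The coalescence identity at a cut vertex with an extra deleted set `T` of indices
from the second block.  Indices: `Unit` is the cut vertex `v`, `γ` is the first block
(`G` minus its root `r`), `η` is the second block (`H` minus `v`), and `T ⊆ η` is the
set of deleted rows/columns. -/
theorem stmt_13 {R γ η : Type*} [CommRing R]
    [Fintype γ] [DecidableEq γ] [Fintype η] [DecidableEq η]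
    (M : Matrix (Unit ⊕ (γ ⊕ η)) (Unit ⊕ (γ ⊕ η)) R)
    (hsymm : M.IsSymm)
    (hzero : ∀ (g : γ) (h : η),
      M (.inr (.inl g)) (.inr (.inr h)) = 0 ∧ M (.inr (.inr h)) (.inr (.inl g)) = 0)
    (a₁ a₂ : R) (hd : M (.inl ()) (.inl ()) = a₁ + a₂)
    (T : Finset η) :
    -- p_{𝒢,T}
    (M.submatrix
        (Sum.map id (Sum.map id (Subtype.val : {h : η // h ∉ T} → η)))
        (Sum.map id (Sum.map id Subtype.val))).charpoly
      = -- p_{G,r} · p_{H,T}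
        (M.submatrix (fun g : γ => (.inr (.inl g) : Unit ⊕ (γ ⊕ η)))
            (fun g : γ => .inr (.inl g))).charpoly
          * (corner a₂ (fun h : {h : η // h ∉ T} => M (.inl ()) (.inr (.inr h.1)))
              (M.submatrix (fun h : {h : η // h ∉ T} => (.inr (.inr h.1) : Unit ⊕ (γ ⊕ η)))
                (fun h => .inr (.inr h.1)))).charpoly
        + -- p_G · p_{H,T∪{v}}
          (corner a₁ (fun g : γ => M (.inl ()) (.inr (.inl g)))
              (M.submatrix (fun g : γ => (.inr (.inl g) : Unit ⊕ (γ ⊕ η)))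
                (fun g : γ => .inr (.inl g)))).charpoly
            * (M.submatrix (fun h : {h : η // h ∉ T} => (.inr (.inr h.1) : Unit ⊕ (γ ⊕ η)))
                (fun h => .inr (.inr h.1))).charpoly
        - -- x · p_{G,r} · p_{H,T∪{v}}
          X * (M.submatrix (fun g : γ => (.inr (.inl g) : Unit ⊕ (γ ⊕ η)))
              (fun g : γ => .inr (.inl g))).charpoly
            * (M.submatrix (fun h : {h : η // h ∉ T} => (.inr (.inr h.1) : Unit ⊕ (γ ⊕ η)))
                (fun h => .inr (.inr h.1))).charpoly := by
  classical
  have hs : ∀ i j, M i j = M j i := fun i j => (hsymm.apply i j).symm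
  have hmat : M.submatrix
        (Sum.map id (Sum.map id (Subtype.val : {h : η // h ∉ T} → η)))
        (Sum.map id (Sum.map id Subtype.val))
      = corner (a₁ + a₂)
          (Sum.elim (fun g : γ => M (.inl ()) (.inr (.inl g)))
            (fun h : {h : η // h ∉ T} => M (.inl ()) (.inr (.inr h.1))))
          (Matrix.fromBlocks
            (M.submatrix (fun g : γ => (.inr (.inl g) : Unit ⊕ (γ ⊕ η)))
              (fun g : γ => .inr (.inl g)))
            0 0
            (M.submatrix (fun h : {h : η // h ∉ T} => (.inr (.inr h.1) : Unit ⊕ (γ ⊕ η)))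
              (fun h => .inr (.inr h.1)))) := by
    ext i j
    rcases i with _ | g | h <;> rcases j with _ | g' | h' <;>
      simp [corner, Matrix.fromBlocks, hd, (hzero _ _).1, (hzero _ _).2]
    · exact hs _ _
    · exact hs _ _
  rw [hmat, corner_core]
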